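/- One-dimensional weighted elliptic estimate underlying the normal-derivative bounds. Let ρ : [0,1] → ℝ be of class C² with ρ(x) > 0 for 0 < x < 1, ρ(0) = ρ(1) = 0, ρ'(0) > 0 and ρ'(1) < 0. Then there exists a constant C > 0 (depending only on ρ) such that for every w : [0,1] → ℝ of class C¹: ∫₀¹ ρ(x)² |w'(x)|² dx + ∫₀¹ |w(x)|² dx ≤ C · ( ∫₀¹ | ρ(x) w'(x) + 2 ρ'(x) w(x) |² dx + ∫₀¹ ρ(x) |w(x)|² dx ). -/

import Mathlib

open Set MeasureTheory

/-- One-dimensional weighted elliptic estimate underlying the normal-derivative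
bounds: for `ρ` of class `C²` on `[0,1]`, positive in `(0,1)`, vanishing at the
endpoints with `ρ'(0) > 0` and `ρ'(1) < 0`, there is `C > 0` such that for every
`C¹` function `w` on `[0,1]`,
`∫ ρ² |w'|² + ∫ |w|² ≤ C (∫ |ρ w' + 2 ρ' w|² + ∫ ρ |w|²)`. -/
theorem one_dim_weighted_elliptic (ρ : ℝ → ℝ)
    (hρ : ContDiffOn ℝ 2 ρ (Icc (0:ℝ) 1))
    (hρpos : ∀ x ∈ Ioo (0:ℝ) 1, 0 < ρ x)
    (hρ0 : ρ 0 = 0) (hρ1 : ρ 1 = 0)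
    (hρ'0 : 0 < derivWithin ρ (Icc (0:ℝ) 1) 0)
    (hρ'1 : derivWithin ρ (Icc (0:ℝ) 1) 1 < 0) :
    ∃ C > 0, ∀ w : ℝ → ℝ, ContDiffOn ℝ 1 w (Icc (0:ℝ) 1) →
      (∫ x in Ioo (0:ℝ) 1, (ρ x) ^ 2 * (derivWithin w (Icc (0:ℝ) 1) x) ^ 2)
          + ∫ x in Ioo (0:ℝ) 1, (w x) ^ 2
        ≤ C * ((∫ x in Ioo (0:ℝ) 1,
              (ρ x * derivWithin w (Icc (0:ℝ) 1) x
                + 2 * derivWithin ρ (Icc (0:ℝ) 1) x * w x) ^ 2)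
            + ∫ x in Ioo (0:ℝ) 1, ρ x * (w x) ^ 2) := by
  have hud : UniqueDiffOn ℝ (Icc (0:ℝ) 1) := uniqueDiffOn_Icc zero_lt_one
  set ρ' : ℝ → ℝ := derivWithin ρ (Icc (0:ℝ) 1) with hρ'def
  set ρ'' : ℝ → ℝ := derivWithin ρ' (Icc (0:ℝ) 1) with hρ''def
  have hρC1 : ContDiffOn ℝ 1 ρ (Icc (0:ℝ) 1) := hρ.of_le one_le_two
  have hρ'C1 : ContDiffOn ℝ 1 ρ' (Icc (0:ℝ) 1) := hρ.derivWithin hud (by norm_num)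
  have cρ : ContinuousOn ρ (Icc (0:ℝ) 1) := hρ.continuousOn
  have cρ' : ContinuousOn ρ' (Icc (0:ℝ) 1) := hρ'C1.continuousOn
  have cρ'' : ContinuousOn ρ'' (Icc (0:ℝ) 1) := hρ'C1.continuousOn_derivWithin hud le_rfl
  -- ρ is nonnegative on [0,1]
  have hρnn : ∀ x ∈ Icc (0:ℝ) 1, 0 ≤ ρ x := by
    intro x hx
    rcases eq_or_lt_of_le hx.1 with h0 | h0
    · rw [← h0, hρ0]
    rcases eq_or_lt_of_le hx.2 with h1 | h1
    · rw [h1, hρ1]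
    exact (hρpos x ⟨h0, h1⟩).le
  -- bound M on ρ''
  obtain ⟨M0, hM0⟩ := isCompact_Icc.exists_bound_of_continuousOn cρ''
  set M : ℝ := max M0 0 with hMdef
  have hM : 0 ≤ M := le_max_right _ _
  have hMb : ∀ x ∈ Icc (0:ℝ) 1, ρ'' x ≤ M := fun x hx =>
    le_trans (le_trans (le_abs_self _) (hM0 x hx)) (le_max_left _ _)
  -- positive lower bound c for ρ'^2 + ρ on [0,1]
  have hcont : ContinuousOn (fun x => ρ' x ^ 2 + ρ x) (Icc (0:ℝ) 1) := (cρ'.pow 2).add cρ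
  obtain ⟨z, hz, hzmin'⟩ := isCompact_Icc.exists_isMinOn (nonempty_Icc.2 zero_le_one) hcont
  have hzmin : ∀ x ∈ Icc (0:ℝ) 1, ρ' z ^ 2 + ρ z ≤ ρ' x ^ 2 + ρ x := fun x hx => hzmin' hx
  set c : ℝ := ρ' z ^ 2 + ρ z with hcdef
  have hc : 0 < c := by
    rcases eq_or_lt_of_le hz.1 with h0 | h0
    · rw [hcdef, ← h0, hρ0]; positivity
    rcases eq_or_lt_of_le hz.2 with h1 | h1
    · rw [hcdef, h1, hρ1]
      have : ρ' 1 ≠ 0 := ne_of_lt hρ'1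
      positivity
    · have := hρpos z ⟨h0, h1⟩
      have : 0 ≤ ρ' z ^ 2 := sq_nonneg _
      rw [hcdef]; nlinarith [hρpos z ⟨h0, h1⟩]
  refine ⟨(1 + 2 * M) + (3 + 2 * M) / c, by positivity, ?_⟩
  intro w hw
  set w' : ℝ → ℝ := derivWithin w (Icc (0:ℝ) 1) with hw'def
  have cw : ContinuousOn w (Icc (0:ℝ) 1) := hw.continuousOn
  have cw' : ContinuousOn w' (Icc (0:ℝ) 1) := hw.continuousOn_derivWithin hud le_rfl
  -- shorthand for integrability from continuity
  have intg : ∀ f : ℝ → ℝ, ContinuousOn f (Icc (0:ℝ) 1) → IntegrableOn f (Ioo (0:ℝ) 1) :=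
    fun f hf => hf.integrableOn_Icc.mono_set Ioo_subset_Icc_self
  -- the integrands
  set f1 : ℝ → ℝ := fun x => ρ x ^ 2 * w' x ^ 2 with hf1def
  set fW : ℝ → ℝ := fun x => w x ^ 2 with hfWdef
  set fg : ℝ → ℝ := fun x => (ρ x * w' x + 2 * ρ' x * w x) ^ 2 with hfgdef
  set fP : ℝ → ℝ := fun x => ρ x * w x ^ 2 with hfPdef
  set f2 : ℝ → ℝ := fun x => ρ' x ^ 2 * w x ^ 2 with hf2def
  set f3 : ℝ → ℝ := fun x => ρ x * ρ'' x * w x ^ 2 with hf3def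
  set F : ℝ → ℝ := fun x => ρ x * ρ' x * w x ^ 2 with hFdef
  set G : ℝ → ℝ := fun x =>
    (ρ' x * ρ' x + ρ x * ρ'' x) * w x ^ 2 + ρ x * ρ' x * (2 * w x ^ 1 * w' x) with hGdef
  have cf1 : ContinuousOn f1 (Icc (0:ℝ) 1) := (cρ.pow 2).mul (cw'.pow 2)
  have cfW : ContinuousOn fW (Icc (0:ℝ) 1) := cw.pow 2
  have cfg : ContinuousOn fg (Icc (0:ℝ) 1) :=
    ((cρ.mul cw').add ((continuousOn_const.mul cρ').mul cw)).pow 2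
  have cfP : ContinuousOn fP (Icc (0:ℝ) 1) := cρ.mul (cw.pow 2)
  have cf2 : ContinuousOn f2 (Icc (0:ℝ) 1) := (cρ'.pow 2).mul (cw.pow 2)
  have cf3 : ContinuousOn f3 (Icc (0:ℝ) 1) := (cρ.mul cρ'').mul (cw.pow 2)
  have cG : ContinuousOn G (Icc (0:ℝ) 1) :=
    (((cρ'.mul cρ').add (cρ.mul cρ'')).mul (cw.pow 2)).add
      ((cρ.mul cρ').mul ((continuousOn_const.mul (cw.pow 1)).mul cw'))
  -- derivatives at interior points
  have hder : ∀ f : ℝ → ℝ, ContDiffOn ℝ 1 f (Icc (0:ℝ) 1) → ∀ x ∈ Ioo (0:ℝ) 1,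
      HasDerivAt f (derivWithin f (Icc (0:ℝ) 1) x) x := fun f hf x hx =>
    ((hf.differentiableOn one_ne_zero) x (Ioo_subset_Icc_self hx)).hasDerivWithinAt.hasDerivAt
      (Icc_mem_nhds hx.1 hx.2)
  have hFd : ∀ x ∈ Ioo (0:ℝ) 1, HasDerivAt F (G x) x := by
    intro x hx
    exact ((hder ρ hρC1 x hx).mul (hder ρ' hρ'C1 x hx)).mul ((hder w hw x hx).pow 2)
  -- integration by parts: ∫ G = 0
  have hGint : ∫ x in Ioo (0:ℝ) 1, G x = 0 := by
    have hib : ∫ y in (0:ℝ)..1, G y = F 1 - F 0 :=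
      intervalIntegral.integral_eq_sub_of_hasDeriv_right_of_le zero_le_one
        ((cρ.mul cρ').mul (cw.pow 2))
        (fun x hx => (hFd x hx).hasDerivWithinAt)
        ((cG.mono (by rw [uIcc_of_le zero_le_one])).intervalIntegrable)
    rw [intervalIntegral.integral_of_le zero_le_one, integral_Ioc_eq_integral_Ioo] at hib
    have hF0 : F 0 = 0 := by simp [hFdef, hρ0]
    have hF1 : F 1 = 0 := by simp [hFdef, hρ1]
    rw [hib, hF0, hF1, sub_zero]
  -- pointwise algebraic identity
  have ptw : ∀ x, fg x + 2 * f3 x = f1 x + 2 * f2 x + 2 * G x := by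
    intro x
    simp only [hfgdef, hf3def, hf1def, hf2def, hGdef, pow_one]
    ring
  -- key integral identity
  set D : ℝ := ∫ x in Ioo (0:ℝ) 1, fg x with hDdef
  set P : ℝ := ∫ x in Ioo (0:ℝ) 1, fP x with hPdef
  set A1 : ℝ := ∫ x in Ioo (0:ℝ) 1, f1 x with hA1def
  set A2 : ℝ := ∫ x in Ioo (0:ℝ) 1, f2 x with hA2def
  set A3 : ℝ := ∫ x in Ioo (0:ℝ) 1, f3 x with hA3def
  set W : ℝ := ∫ x in Ioo (0:ℝ) 1, fW x with hWdef
  have key : D + 2 * A3 = A1 + 2 * A2 := by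
    have i1 : IntegrableOn (fun x => 2 * f2 x) (Ioo (0:ℝ) 1) := (intg f2 cf2).const_mul 2
    have i2 : IntegrableOn (fun x => 2 * G x) (Ioo (0:ℝ) 1) := (intg G cG).const_mul 2
    have i3 : IntegrableOn (fun x => 2 * f3 x) (Ioo (0:ℝ) 1) := (intg f3 cf3).const_mul 2
    have i12 : IntegrableOn (fun x => f1 x + 2 * f2 x) (Ioo (0:ℝ) 1) := (intg f1 cf1).add i1
    have hL : ∫ x in Ioo (0:ℝ) 1, (fg x + 2 * f3 x)
        = D + 2 * A3 := by
      have := integral_add (μ := volume.restrict (Ioo (0:ℝ) 1)) (intg fg cfg) i3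
      rw [this, integral_const_mul]
    have e12 : ∫ x in Ioo (0:ℝ) 1, (f1 x + 2 * f2 x) = A1 + 2 * A2 := by
      have := integral_add (μ := volume.restrict (Ioo (0:ℝ) 1)) (intg f1 cf1) i1
      rw [this, integral_const_mul]
    have hR : ∫ x in Ioo (0:ℝ) 1, (f1 x + 2 * f2 x + 2 * G x)
        = (∫ x in Ioo (0:ℝ) 1, (f1 x + 2 * f2 x)) + ∫ x in Ioo (0:ℝ) 1, 2 * G x :=
      integral_add (μ := volume.restrict (Ioo (0:ℝ) 1)) i12 i2
    have heq : (fun x => fg x + 2 * f3 x) = fun x => f1 x + 2 * f2 x + 2 * G x := funext ptw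
    rw [heq] at hL
    rw [hR, e12, integral_const_mul, hGint] at hL
    linarith
  -- bound A3 ≤ M * P
  have hA3 : A3 ≤ M * P := by
    have : A3 ≤ ∫ x in Ioo (0:ℝ) 1, M * fP x := by
      refine setIntegral_mono_on (intg f3 cf3) ((intg fP cfP).const_mul M)
        measurableSet_Ioo (fun x hx => ?_)
      have h1 : ρ'' x ≤ M := hMb x (Ioo_subset_Icc_self hx)
      have h2 : 0 ≤ ρ x := (hρpos x hx).le
      have h3 : 0 ≤ w x ^ 2 := sq_nonneg _
      simp only [hf3def, hfPdef]
      nlinarith [mul_nonneg (mul_nonneg h2 h3) (sub_nonneg.2 h1)]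
    rwa [integral_const_mul] at this
  -- bound c * W ≤ A2 + P
  have hcW : c * W ≤ A2 + P := by
    have h1 : (∫ x in Ioo (0:ℝ) 1, c * fW x) ≤ ∫ x in Ioo (0:ℝ) 1, (f2 x + fP x) := by
      refine setIntegral_mono_on ((intg fW cfW).const_mul c)
        ((intg f2 cf2).add (intg fP cfP)) measurableSet_Ioo (fun x hx => ?_)
      have h2 : c ≤ ρ' x ^ 2 + ρ x := hzmin x (Ioo_subset_Icc_self hx)
      have h3 : 0 ≤ w x ^ 2 := sq_nonneg _
      simp only [hfWdef, hf2def, hfPdef]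
      nlinarith [mul_nonneg h3 (sub_nonneg.2 h2)]
    rw [integral_const_mul, integral_add (intg f2 cf2) (intg fP cfP)] at h1
    exact h1
  -- nonnegativity
  have hDnn : 0 ≤ D := setIntegral_nonneg measurableSet_Ioo (fun x _ => sq_nonneg _)
  have hPnn : 0 ≤ P := setIntegral_nonneg measurableSet_Ioo
    (fun x hx => mul_nonneg (hρnn x (Ioo_subset_Icc_self hx)) (sq_nonneg _))
  have hA1nn : 0 ≤ A1 := setIntegral_nonneg measurableSet_Ioo
    (fun x _ => mul_nonneg (sq_nonneg _) (sq_nonneg _))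
  have hA2nn : 0 ≤ A2 := setIntegral_nonneg measurableSet_Ioo
    (fun x _ => mul_nonneg (sq_nonneg _) (sq_nonneg _))
  have hWnn : 0 ≤ W := setIntegral_nonneg measurableSet_Ioo (fun x _ => sq_nonneg _)
  -- conclude
  show A1 + W ≤ ((1 + 2 * M) + (3 + 2 * M) / c) * (D + P)
  have hMD : 0 ≤ M * D := mul_nonneg hM hDnn
  have hMP : 0 ≤ M * P := mul_nonneg hM hPnn
  have hexp1 : (1 + 2 * M) * (D + P) = D + P + 2 * (M * D) + 2 * (M * P) := by ring
  have hexp2 : (3 + 2 * M) * (D + P) = 3 * D + 3 * P + 2 * (M * D) + 2 * (M * P) := by ring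
  have hA1b : A1 ≤ (1 + 2 * M) * (D + P) := by
    rw [hexp1]; linarith
  have hWb : W ≤ (3 + 2 * M) / c * (D + P) := by
    have h1 : c * W ≤ (3 + 2 * M) * (D + P) := by
      rw [hexp2]; linarith
    rw [div_mul_eq_mul_div, le_div_iff₀ hc, mul_comm]
    exact h1
  have hsplit : ((1 + 2 * M) + (3 + 2 * M) / c) * (D + P)
      = (1 + 2 * M) * (D + P) + (3 + 2 * M) / c * (D + P) := by ring
  linarith
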